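/- Let p be an odd prime, α ∈ ℚ_p with p-adic continued fraction expansion [0, b_1, b_2, ...] (so |b_i|_p ≥ p for i ≥ 1 and |α - A_n/B_n|_p < |B_n|_p^{-2} for all n ≥ 0). Suppose for some n ≥ 1 the tuple (b_1,...,b_n) is palindromic, so that A_n = B_{n-1}. Then |α² − A_{n-1}/B_n|_p < |b_1|_p / |B_n|_p². -/

import Mathlib

/-- Lemma on α²: if the p-adic continued fraction of α starts with a
palindrome of length n (so that A_n = B_{n-1}), then
|α² − A_{n-1}/B_n|_p < |b_1|_p / |B_n|_p². -/
theorem stmt_4 (p : ℕ) [Fact p.Prime] (hodd : Odd p)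
    (α : ℚ_[p]) (b A B : ℤ → ℚ_[p])
    (hb0 : b 0 = 0)
    (hb : ∀ i : ℤ, 1 ≤ i → (p : ℝ) ≤ ‖b i‖)
    (hAm2 : A (-2) = 0) (hAm1 : A (-1) = 1)
    (hBm2 : B (-2) = 1) (hBm1 : B (-1) = 0)
    (hArec : ∀ i : ℤ, 0 ≤ i → A i = b i * A (i - 1) + A (i - 2))
    (hBrec : ∀ i : ℤ, 0 ≤ i → B i = b i * B (i - 1) + B (i - 2))
    (hdet : ∀ m : ℤ, 0 ≤ m → A m * B (m - 1) - B m * A (m - 1) = (-1) ^ m.toNat)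
    (hBnorm : ∀ m : ℤ, 1 ≤ m → ‖B m‖ = ∏ j ∈ Finset.Icc (1 : ℤ) m, ‖b j‖)
    (hBne : ∀ m : ℤ, 0 ≤ m → B m ≠ 0)
    (hα : ‖α‖ = ‖b 1‖⁻¹)
    (happrox : ∀ m : ℤ, 0 ≤ m → ‖α - A m / B m‖ < (‖B m‖ ^ 2)⁻¹)
    (n : ℤ) (hn : 1 ≤ n)
    (hpal : A n = B (n - 1)) :
    ‖α ^ 2 - A (n - 1) / B n‖ < ‖b 1‖ / ‖B n‖ ^ 2 := by
  have hp : (1 : ℝ) < p := by exact_mod_cast (Fact.out : p.Prime).one_lt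
  have hb1 : (p : ℝ) ≤ ‖b 1‖ := hb 1 le_rfl
  have hb1gt1 : (1 : ℝ) < ‖b 1‖ := lt_of_lt_of_le hp hb1
  have hb1pos : (0 : ℝ) < ‖b 1‖ := by linarith
  have hBn0 : B n ≠ 0 := hBne n (by linarith)
  have hBn1ne : B (n - 1) ≠ 0 := hBne (n - 1) (by linarith)
  have hBnpos : (0 : ℝ) < ‖B n‖ := norm_pos_iff.mpr hBn0
  have hBn1pos : (0 : ℝ) < ‖B (n - 1)‖ := norm_pos_iff.mpr hBn1ne
  have hBnge : ‖b 1‖ ≤ ‖B n‖ := by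
    rw [hBnorm n hn, ← Finset.Ioc_insert_left hn,
      Finset.prod_insert Finset.left_notMem_Ioc]
    have hrest : (1 : ℝ) ≤ ∏ j ∈ Finset.Ioc (1 : ℤ) n, ‖b j‖ := by
      have h1 : (∏ _j ∈ Finset.Ioc (1 : ℤ) n, (1 : ℝ))
          ≤ ∏ j ∈ Finset.Ioc (1 : ℤ) n, ‖b j‖ := by
        refine Finset.prod_le_prod (fun j _ => zero_le_one) (fun j hj => ?_)
        have := hb j (le_of_lt (Finset.mem_Ioc.mp hj).1)
        linarith
      simpa using h1
    nlinarith
  have hsq : ‖b 1‖ < ‖B n‖ ^ 2 := by nlinarith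
  have hlt : ‖α - A n / B n‖ < ‖α‖ := by
    calc ‖α - A n / B n‖ < (‖B n‖ ^ 2)⁻¹ := happrox n (by linarith)
      _ < ‖b 1‖⁻¹ := by
          apply inv_strictAnti₀ hb1pos hsq
      _ = ‖α‖ := hα.symm
  -- ultrametric: norm of A n / B n equals norm of α
  have hnormAB : ‖A n / B n‖ = ‖α‖ := by
    have hrw : A n / B n = α + (-(α - A n / B n)) := by ring
    have hne : ‖α‖ ≠ ‖-(α - A n / B n)‖ := by
      rw [norm_neg]; exact (ne_of_lt hlt).symm
    rw [hrw, Padic.add_eq_max_of_ne hne, norm_neg,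
      max_eq_left (le_of_lt hlt)]
  have hAn : ‖A n‖ = ‖B n‖ * ‖b 1‖⁻¹ := by
    have := hnormAB
    rw [norm_div, hα, div_eq_iff (ne_of_gt hBnpos)] at this
    rw [this]; ring
  have hBrel : ‖B (n - 1)‖ * ‖b 1‖ = ‖B n‖ := by
    have : ‖B (n - 1)‖ = ‖B n‖ * ‖b 1‖⁻¹ := by rw [← hpal]; exact hAn
    rw [this]; field_simp
  have hdecomp : α ^ 2 - A (n - 1) / B n
      = α * (α - A n / B n) + (A n / B n) * (α - A (n - 1) / B (n - 1)) := by
    rw [hpal]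
    field_simp
    ring
  have h1 : ‖α * (α - A n / B n)‖ < ‖b 1‖ / ‖B n‖ ^ 2 := by
    rw [norm_mul, hα]
    have h := happrox n (by linarith)
    have hαpos : (0 : ℝ) < ‖b 1‖⁻¹ := by positivity
    calc ‖b 1‖⁻¹ * ‖α - A n / B n‖ < ‖b 1‖⁻¹ * (‖B n‖ ^ 2)⁻¹ := by
          exact mul_lt_mul_of_pos_left h hαpos
      _ ≤ ‖b 1‖ / ‖B n‖ ^ 2 := by
          rw [div_eq_mul_inv]
          have : ‖b 1‖⁻¹ ≤ ‖b 1‖ := by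
            calc ‖b 1‖⁻¹ ≤ 1 := by
                  rw [inv_le_one_iff₀]; right; linarith
              _ ≤ ‖b 1‖ := by linarith
          have hBinv : (0 : ℝ) < (‖B n‖ ^ 2)⁻¹ := by positivity
          nlinarith
  have h2 : ‖(A n / B n) * (α - A (n - 1) / B (n - 1))‖ < ‖b 1‖ / ‖B n‖ ^ 2 := by
    rw [norm_mul, hnormAB, hα]
    have h := happrox (n - 1) (by linarith)
    have hαpos : (0 : ℝ) < ‖b 1‖⁻¹ := by positivity
    calc ‖b 1‖⁻¹ * ‖α - A (n - 1) / B (n - 1)‖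
        < ‖b 1‖⁻¹ * (‖B (n - 1)‖ ^ 2)⁻¹ := mul_lt_mul_of_pos_left h hαpos
      _ = ‖b 1‖ / ‖B n‖ ^ 2 := by
          rw [← hBrel]
          field_simp
  calc ‖α ^ 2 - A (n - 1) / B n‖
      = ‖α * (α - A n / B n) + (A n / B n) * (α - A (n - 1) / B (n - 1))‖ := by
        rw [hdecomp]
    _ ≤ max ‖α * (α - A n / B n)‖ ‖(A n / B n) * (α - A (n - 1) / B (n - 1))‖ :=
        Padic.nonarchimedean _ _
    _ < ‖b 1‖ / ‖B n‖ ^ 2 := max_lt h1 h2
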